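/- For a random index J on a neighborhood set N with P(J=j) = w_j = ‖x_i − x_j‖ / ∑_{l∈N} ‖x_i − x_l‖ (all x_j ≠ x_i), the importance-sampled consensus gradient c(x_i − x_J)/w_J satisfies E[‖c(x_i − x_J)/w_J − c∑_{j∈N}(x_i − x_j)‖²] = c²[(∑_{j∈N}‖x_i − x_j‖)² − ‖∑_{j∈N}(x_i − x_j)‖²]. -/

import Mathlib

/-- Theorem 4 of the paper: with sampling probabilities
`w j = ‖x_i − x_j‖ / ∑_l ‖x_i − x_l‖`, the variance of the importance-sampled
consensus gradient `c (x_i − x_J) / w_J` equals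
`c² [(∑_j ‖x_i − x_j‖)² − ‖∑_j (x_i − x_j)‖²]`. -/
theorem consensus_gradient_variance (n M : ℕ)
    (xi : EuclideanSpace ℝ (Fin M)) (x : Fin n → EuclideanSpace ℝ (Fin M))
    (hx : ∀ j, x j ≠ xi) (c : ℝ) (hc : 0 < c)
    (w : Fin n → ℝ) (hw : ∀ j, w j = ‖xi - x j‖ / ∑ l, ‖xi - x l‖) :
    ∑ j, w j * ‖(c / w j) • (xi - x j) - c • ∑ l, (xi - x l)‖ ^ 2 =
      c ^ 2 * ((∑ j, ‖xi - x j‖) ^ 2 - ‖∑ j, (xi - x j)‖ ^ 2) := by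
  rcases Nat.eq_zero_or_pos n with hn | hn
  · subst hn; simp
  have hne : (Finset.univ : Finset (Fin n)).Nonempty := ⟨⟨0, hn⟩, Finset.mem_univ _⟩
  set d : Fin n → EuclideanSpace ℝ (Fin M) := fun j => xi - x j with hd
  set S := ∑ l, ‖xi - x l‖ with hS
  set T := ∑ l, (xi - x l) with hT
  have hdpos : ∀ j, 0 < ‖d j‖ := fun j =>
    norm_pos_iff.mpr (sub_ne_zero.mpr (Ne.symm (hx j)))
  have hSpos : 0 < S := Finset.sum_pos (fun j _ => hdpos j) hne
  have hwpos : ∀ j, 0 < w j := fun j => by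
    rw [hw]; exact div_pos (hdpos j) hSpos
  have hwsum : ∑ j, w j = 1 := by
    simp only [hw]
    rw [← Finset.sum_div, ← hS, div_self hSpos.ne']
  have key : ∀ j, w j * ‖(c / w j) • d j - c • T‖ ^ 2
      = c ^ 2 * (‖d j‖ * S) - 2 * c ^ 2 * (inner ℝ (d j) T : ℝ) + c ^ 2 * w j * ‖T‖ ^ 2 := by
    intro j
    have hw0 : w j ≠ 0 := (hwpos j).ne'
    have habs : ‖c / w j‖ = c / w j := by
      rw [Real.norm_eq_abs, abs_of_pos (div_pos hc (hwpos j))]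
    have hcw : w j = ‖d j‖ / S := hw j
    rw [norm_sub_sq_real, norm_smul, norm_smul, real_inner_smul_left, real_inner_smul_right,
      habs, Real.norm_eq_abs, abs_of_pos hc]
    rw [hcw] at hw0 ⊢
    field_simp [(hdpos j).ne', hSpos.ne']
  calc ∑ j, w j * ‖(c / w j) • d j - c • T‖ ^ 2
      = ∑ j, (c ^ 2 * (‖d j‖ * S) - 2 * c ^ 2 * (inner ℝ (d j) T : ℝ) + c ^ 2 * w j * ‖T‖ ^ 2) := by
        exact Finset.sum_congr rfl fun j _ => key j
    _ = c ^ 2 * (S ^ 2 - ‖T‖ ^ 2) := by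
        rw [Finset.sum_add_distrib, Finset.sum_sub_distrib]
        rw [← Finset.mul_sum, ← Finset.mul_sum, ← Finset.sum_mul]
        have h2 : ∑ j, (inner ℝ (d j) T : ℝ) = ‖T‖ ^ 2 := by
          rw [← sum_inner, ← hT, real_inner_self_eq_norm_sq]
        have h3 : ∑ j : Fin n, c ^ 2 * w j * ‖T‖ ^ 2 = c ^ 2 * ‖T‖ ^ 2 := by
          calc ∑ j : Fin n, c ^ 2 * w j * ‖T‖ ^ 2
              = ∑ j : Fin n, w j * (c ^ 2 * ‖T‖ ^ 2) := by
                exact Finset.sum_congr rfl fun j _ => by ring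
            _ = (∑ j : Fin n, w j) * (c ^ 2 * ‖T‖ ^ 2) := by rw [Finset.sum_mul]
            _ = c ^ 2 * ‖T‖ ^ 2 := by rw [hwsum, one_mul]
        rw [h2, h3, ← hS]
        ring
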